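/- Assume (F1) and (F2), let c ∈ ℝ, and let η : M^{c'} → M^{c'} (for some c' > c) satisfy (η1) and (η2). Suppose the pair (J, η) satisfies (PS)_c. Then for every A ∈ F with sup_{x ∈ A} J(x) = c there exists a point x̄ ∈ A ∩ K_c; in particular the critical set K_c is nonempty. -/

import Mathlib

open Filter Topology

/-- Kuratowski limit superior of a sequence of subsets of a metric space. -/
def SeqLimsup {X : Type*} [MetricSpace X] (A : ℕ → Set X) : Set X :=
  {x | ∃ φ : ℕ → ℕ, StrictMono φ ∧
    ∃ y : ℕ → X, (∀ n, y n ∈ A (φ n)) ∧ Tendsto y atTop (𝓝 x)}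

/-- Assume (F1) and (F2), let the minimax level `c` be real, and let
`η : M^{c'} → M^{c'}` (for some `c' > c`) satisfy (η1) and (η2). Suppose the pair
`(J, η)` satisfies `(PS)_c`. Then for every `A ∈ F` with `sup_{x ∈ A} J(x) = c`
there exists a point `y ∈ A ∩ K_c`; in particular the critical set `K_c` is
nonempty. -/
theorem optimal_set_meets_critical_set {X : Type*} [MetricSpace X]
    (F : Set (Set X)) (J : X → EReal) (hJ : LowerSemicontinuous J)
    (c c' : ℝ) (hcc' : c < c')
    (hc : (⨅ A ∈ F, ⨆ x ∈ A, J x) = (c : EReal))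
    -- (F1): every member of F is closed
    (hF1 : ∀ A ∈ F, IsClosed A)
    -- (F2): stability of F under Kuratowski limsup of sequences in the sublevel M^{c'}
    (hF2 : ∀ A : ℕ → Set X, (∀ n, A n ∈ F) →
      (∀ n, ∀ x ∈ A n, J x ≤ (c' : EReal)) → SeqLimsup A ∈ F)
    -- η maps the sublevel M^{c'} into itself
    (η : X → X) (hηmap : ∀ x, J x ≤ (c' : EReal) → J (η x) ≤ (c' : EReal))
    -- (η1)
    (hη1 : ∀ A ∈ F, (∀ x ∈ A, J x ≤ (c' : EReal)) → η '' A ∈ F)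
    -- (η2)
    (hη2 : ∀ x, J x ≤ (c' : EReal) → J (η x) ≤ J x)
    -- the critical set of J relative to η at level c
    (K : Set X) (hK : K = {x | J x = (c : EReal) ∧ J (η x) = (c : EReal)})
    -- (PS)_c
    (hPS : ∀ u : ℕ → X,
      Tendsto (fun n => J (u n)) atTop (𝓝 (c : EReal)) →
      Tendsto (fun n => J (η (u n))) atTop (𝓝 (c : EReal)) →
      ∃ φ : ℕ → ℕ, StrictMono φ ∧ ∃ y ∈ K, Tendsto (u ∘ φ) atTop (𝓝 y)) :
    (∀ A ∈ F, (⨆ x ∈ A, J x) = (c : EReal) → (A ∩ K).Nonempty) ∧ K.Nonempty := by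
  have hge : ∀ S ∈ F, (c : EReal) ≤ ⨆ x ∈ S, J x := by
    intro S hS
    rw [← hc]
    exact iInf₂_le S hS
  have main : ∀ A ∈ F, (⨆ x ∈ A, J x) = (c : EReal) → (A ∩ K).Nonempty := by
    intro A hA hsup
    have hAle : ∀ x ∈ A, J x ≤ (c : EReal) := by
      intro x hx; rw [← hsup]; exact le_iSup₂ (f := fun x _ => J x) x hx
    have hAle' : ∀ x ∈ A, J x ≤ (c' : EReal) := fun x hx =>
      (hAle x hx).trans (by exact_mod_cast hcc'.le)
    have hηA : η '' A ∈ F := hη1 A hA hAle'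
    have hgeη : (c : EReal) ≤ ⨆ x ∈ A, J (η x) := by
      have h := hge _ hηA
      rwa [iSup_image] at h
    have hchoice : ∀ n : ℕ, ∃ x ∈ A, ((c - 1/(n+1) : ℝ) : EReal) < J (η x) := by
      intro n
      have hlt : ((c - 1/(n+1) : ℝ) : EReal) < ⨆ x ∈ A, J (η x) := by
        refine lt_of_lt_of_le ?_ hgeη
        exact_mod_cast sub_lt_self c (by positivity)
      obtain ⟨x, hx⟩ := lt_iSup_iff.mp hlt
      obtain ⟨hxA, hx'⟩ := lt_iSup_iff.mp hx
      exact ⟨x, hxA, hx'⟩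
    choose u hu hlt' using hchoice
    have huc : ∀ n, J (u n) ≤ (c : EReal) := fun n => hAle _ (hu n)
    have huη : ∀ n, J (η (u n)) ≤ J (u n) := fun n => hη2 _ (hAle' _ (hu n))
    have haux : Tendsto (fun n : ℕ => ((c - 1/(n+1) : ℝ) : EReal)) atTop (𝓝 (c : EReal)) := by
      refine EReal.tendsto_coe.2 ?_
      have h : Tendsto (fun n : ℕ => c - 1/((n:ℝ)+1)) atTop (𝓝 (c - 0)) :=
        Tendsto.sub tendsto_const_nhds tendsto_one_div_add_atTop_nhds_zero_nat
      simpa using h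
    have hJu : Tendsto (fun n => J (u n)) atTop (𝓝 (c : EReal)) := by
      refine tendsto_of_tendsto_of_tendsto_of_le_of_le haux tendsto_const_nhds ?_ ?_
      · exact fun n => ((hlt' n).trans_le (huη n)).le
      · exact fun n => huc n
    have hJηu : Tendsto (fun n => J (η (u n))) atTop (𝓝 (c : EReal)) := by
      refine tendsto_of_tendsto_of_tendsto_of_le_of_le haux tendsto_const_nhds ?_ ?_
      · exact fun n => (hlt' n).le
      · exact fun n => (huη n).trans (huc n)
    obtain ⟨φ, hφ, y, hyK, hconv⟩ := hPS u hJu hJηu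
    refine ⟨y, ?_, hyK⟩
    exact (hF1 A hA).mem_of_tendsto hconv (Eventually.of_forall fun n => hu (φ n))
  refine ⟨main, ?_⟩
  have hdn : ∀ n : ℕ, c < min c' (c + 1/(n+1)) := fun n =>
    lt_min hcc' (lt_add_of_pos_right c (by positivity))
  have hex : ∀ n : ℕ, ∃ S ∈ F, (⨆ x ∈ S, J x) < ((min c' (c + 1/(n+1)) : ℝ) : EReal) := by
    intro n
    have h : (⨅ A ∈ F, ⨆ x ∈ A, J x) < ((min c' (c + 1/(n+1)) : ℝ) : EReal) := by
      rw [hc]; exact_mod_cast hdn n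
    obtain ⟨S, hS⟩ := iInf_lt_iff.mp h
    obtain ⟨hSF, h'⟩ := iInf_lt_iff.mp hS
    exact ⟨S, hSF, h'⟩
  choose A hAF hAlt using hex
  have hAbound : ∀ n, ∀ x ∈ A n, J x ≤ ((min c' (c + 1/(n+1)) : ℝ) : EReal) := by
    intro n x hx
    exact (le_iSup₂ (f := fun x _ => J x) x hx).trans (hAlt n).le
  have hBF : SeqLimsup A ∈ F := by
    refine hF2 A hAF fun n x hx => (hAbound n x hx).trans ?_
    exact_mod_cast min_le_left _ _
  have hBsup : (⨆ x ∈ SeqLimsup A, J x) = (c : EReal) := by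
    refine le_antisymm ?_ (hge _ hBF)
    refine iSup₂_le fun x hx => ?_
    obtain ⟨φ, hφ, y, hy, hyx⟩ := hx
    by_contra h
    push_neg at h
    obtain ⟨z, hcz, hzx⟩ := EReal.exists_between_coe_real h
    have hlsc := hJ x (z : EReal) hzx
    have hev1 : ∀ᶠ k in atTop, (z : EReal) < J (y k) := hyx.eventually hlsc
    have hz0 : (0 : ℝ) < z - c := by
      have : c < z := by exact_mod_cast hcz
      linarith
    have htd : Tendsto (fun k : ℕ => 1 / ((φ k : ℝ) + 1)) atTop (𝓝 0) := by
      have := (tendsto_one_div_add_atTop_nhds_zero_nat (𝕜 := ℝ)).comp hφ.tendsto_atTop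
      simpa [Function.comp_def] using this
    have hev2 : ∀ᶠ k in atTop, 1 / ((φ k : ℝ) + 1) < z - c :=
      htd.eventually_lt_const hz0
    obtain ⟨k, h1, h2⟩ := (hev1.and hev2).exists
    have hb : J (y k) ≤ ((c + 1/((φ k : ℝ)+1) : ℝ) : EReal) := by
      refine (hAbound (φ k) _ (hy k)).trans ?_
      exact_mod_cast min_le_right _ _
    have : J (y k) < (z : EReal) := by
      refine hb.trans_lt ?_
      have hzlt : c + 1/((φ k : ℝ)+1) < z := by linarith
      exact_mod_cast hzlt
    exact absurd (h1.trans this) (lt_irrefl _)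
  obtain ⟨y, _, hyK⟩ := main _ hBF hBsup
  exact ⟨y, hyK⟩
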